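/- Let k be a field of characteristic 0, n ∈ ℕ, and β₀, …, β_n ∈ k with β_n ≠ 0. Define the (n+2)×(n+2) matrix M with rows and columns indexed by i, j ∈ {−1, 0, 1, …, n}, with entry M_{ij} = (j−i)·(i+j+1)!·β_{i+j+1} whenever 0 ≤ i+j+1 ≤ n, and M_{ij} = 0 otherwise. Then the rank of M equals n+2 if n is even, and n+1 if n is odd. In particular M is invertible if and only if n is even. -/

import Mathlib

/-- The `(n+2)×(n+2)` Gram matrix of the form `B_χ` for `χ = χ_{0;β₀,…,β_n}` on `W_{≥−1}`,
in the basis `e_{−1},…,e_n`.  Rows/columns are indexed by `Fin (n+2)`, where the index `i`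
corresponds to `i−1 ∈ {−1,0,…,n}`; the `(i,j)` entry is `(j−i)·(i+j+1)!·β_{i+j+1}` when the
shifted index sum `i+j+1` (here `(i:ℕ)+(j:ℕ)−1`) lies in `{0,…,n}`, and `0` otherwise. -/
noncomputable def gramChi {k : Type*} [Field k] (n : ℕ) (β : ℕ → k) :
    Matrix (Fin (n + 2)) (Fin (n + 2)) k :=
  Matrix.of fun i j =>
    if 1 ≤ (i : ℕ) + (j : ℕ) ∧ (i : ℕ) + (j : ℕ) ≤ n + 1 then
      (((j : ℕ) : k) - ((i : ℕ) : k)) * (Nat.factorial ((i : ℕ) + (j : ℕ) - 1) : k) *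
        β ((i : ℕ) + (j : ℕ) - 1)
    else 0

/-- An "anti-triangular" matrix (zero whenever the index sum is at least `N`) with nonzero
anti-diagonal has nonzero determinant. -/
lemma det_ne_zero_of_antitriangular {k : Type*} [Field k] {N : ℕ}
    (M : Matrix (Fin N) (Fin N) k)
    (hz : ∀ i j : Fin N, N ≤ (i : ℕ) + (j : ℕ) → M i j = 0)
    (hd : ∀ i : Fin N, M i i.rev ≠ 0) : M.det ≠ 0 := by
  have hA : (M.submatrix id ⇑(Fin.revPerm : Equiv.Perm (Fin N))).det
      = (Equiv.Perm.sign (Fin.revPerm : Equiv.Perm (Fin N)) : ℤ) * M.det :=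
    Matrix.det_permute' _ _
  have hBT : (M.submatrix id ⇑(Fin.revPerm : Equiv.Perm (Fin N))).BlockTriangular id := by
    intro i j hij
    have hj : (j : ℕ) < N := j.is_lt
    have hij' : (j : ℕ) < (i : ℕ) := hij
    apply hz
    simp only [id_eq, Fin.revPerm_apply, Fin.val_rev]
    omega
  have hprod : (M.submatrix id ⇑(Fin.revPerm : Equiv.Perm (Fin N))).det
      = ∏ i : Fin N, M i i.rev := by
    rw [Matrix.det_of_upperTriangular hBT]
    rfl
  have hne : (M.submatrix id ⇑(Fin.revPerm : Equiv.Perm (Fin N))).det ≠ 0 := by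
    rw [hprod]
    exact Finset.prod_ne_zero_iff.mpr fun i _ => hd i
  intro h0
  rw [hA, h0, mul_zero] at hne
  exact hne rfl

/-- Taking a principal submatrix does not increase the rank. -/
lemma rank_submatrix_self_le {k : Type*} [Field k] {N M' : ℕ}
    (A : Matrix (Fin N) (Fin N) k) (f : Fin M' → Fin N) :
    (A.submatrix f f).rank ≤ A.rank := by
  classical
  set E : Matrix (Fin M') (Fin N) k := Matrix.of fun i a => if a = f i then 1 else 0 with hE
  set F : Matrix (Fin N) (Fin M') k := Matrix.of fun a j => if a = f j then 1 else 0 with hF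
  have key : A.submatrix f f = E * (A * F) := by
    ext i j
    simp [hE, hF, Matrix.mul_apply, Matrix.submatrix_apply, ite_mul, mul_ite,
      Finset.sum_ite_eq', Finset.sum_ite_eq]
  rw [key]
  exact (Matrix.rank_mul_le_right E (A * F)).trans (Matrix.rank_mul_le_left A F)

theorem gramChi_rank {k : Type*} [Field k] [CharZero k] (n : ℕ) (β : ℕ → k)
    (hβ : β n ≠ 0) :
    (gramChi n β).rank = (if Even n then n + 2 else n + 1) ∧
    (IsUnit (gramChi n β).det ↔ Even n) := by
  by_cases hn : Even n
  · -- even case: the matrix is invertible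
    have hdet : (gramChi n β).det ≠ 0 := by
      apply det_ne_zero_of_antitriangular
      · intro i j hij
        simp only [gramChi, Matrix.of_apply]
        rw [if_neg]
        omega
      · intro i
        have hi : (i : ℕ) < n + 2 := i.is_lt
        have hrev : ((Fin.rev i : Fin (n+2)) : ℕ) = n + 1 - (i : ℕ) := by
          rw [Fin.val_rev]; omega
        simp only [gramChi, Matrix.of_apply, hrev]
        rw [if_pos (by omega)]
        have hsum : (i : ℕ) + (n + 1 - (i : ℕ)) - 1 = n := by omega
        rw [hsum]
        apply mul_ne_zero (mul_ne_zero ?_ ?_) hβ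
        · intro h
          have : ((n + 1 - (i : ℕ) : ℕ) : k) = ((i : ℕ) : k) := by
            linear_combination h
          have h2 : n + 1 - (i : ℕ) = (i : ℕ) := Nat.cast_injective this
          obtain ⟨c, hc⟩ := hn
          omega
        · exact_mod_cast Nat.cast_ne_zero.mpr (Nat.factorial_ne_zero _)
    have hunit : IsUnit (gramChi n β).det := isUnit_iff_ne_zero.mpr hdet
    refine ⟨?_, iff_of_true hunit hn⟩
    rw [if_pos hn]
    have := Matrix.rank_of_isUnit (gramChi n β)
      ((Matrix.isUnit_iff_isUnit_det _).mpr hunit)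
    simpa using this
  · -- odd case
    obtain ⟨c, hc⟩ := Nat.odd_iff.mpr (Nat.not_even_iff.mp hn)
    -- skew symmetry
    have hskew : Matrix.transpose (gramChi n β) = -(gramChi n β) := by
      ext i j
      simp only [gramChi, Matrix.transpose_apply, Matrix.neg_apply, Matrix.of_apply]
      rw [Nat.add_comm (j : ℕ) (i : ℕ)]
      split
      · ring
      · rw [neg_zero]
    have hdet0 : (gramChi n β).det = 0 := by
      have h1 : (gramChi n β).det = (-(gramChi n β)).det := by
        rw [← hskew, Matrix.det_transpose]
      rw [Matrix.det_neg, Fintype.card_fin] at h1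
      have hodd : Odd (n + 2) := by
        refine ⟨c + 1, by omega⟩
      rw [hodd.neg_one_pow] at h1
      have : (2 : k) * (gramChi n β).det = 0 := by linear_combination h1
      rcases mul_eq_zero.mp this with h | h
      · exact absurd h two_ne_zero
      · exact h
    refine ⟨?_, iff_of_false (by rw [hdet0]; exact not_isUnit_zero) hn⟩
    rw [if_neg hn]
    -- upper bound: rank < n + 2
    have hub : (gramChi n β).rank ≤ n + 1 := by
      obtain ⟨v, hv, hmv⟩ := (Matrix.exists_mulVec_eq_zero_iff).mpr hdet0
      have hker : v ∈ LinearMap.ker (gramChi n β).mulVecLin := by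
        rw [LinearMap.mem_ker, Matrix.mulVecLin_apply]
        exact hmv
      have hkerne : LinearMap.ker (gramChi n β).mulVecLin ≠ ⊥ := by
        intro h
        rw [h, Submodule.mem_bot] at hker
        exact hv hker
      have hrn := LinearMap.finrank_range_add_finrank_ker (gramChi n β).mulVecLin
      have hdim : Module.finrank k (Fin (n + 2) → k) = n + 2 := by
        simp
      have hkerpos : 0 < Module.finrank k (LinearMap.ker (gramChi n β).mulVecLin) := by
        rcases Nat.eq_zero_or_pos (Module.finrank k
          (LinearMap.ker (gramChi n β).mulVecLin)) with h | h
        · exact absurd (Submodule.finrank_eq_zero.mp h) hkerne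
        · exact h
      have : (gramChi n β).rank = Module.finrank k
          (LinearMap.range (gramChi n β).mulVecLin) := rfl
      omega
    -- lower bound: an invertible (n+1)×(n+1) principal submatrix
    have hm : c + 1 < n + 2 := by omega
    set m : Fin (n + 2) := ⟨c + 1, hm⟩ with hmdef
    set f : Fin (n + 1) → Fin (n + 2) := m.succAbove with hfdef
    have hfval : ∀ x : Fin (n + 1), ((f x : Fin (n + 2)) : ℕ)
        = if (x : ℕ) < c + 1 then (x : ℕ) else (x : ℕ) + 1 := by
      intro x
      rw [hfdef, Fin.succAbove]
      split <;> rename_i h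
      · rw [if_pos (by simpa [Fin.lt_def, hmdef] using h)]
        rfl
      · rw [if_neg (by simpa [Fin.lt_def, hmdef] using h)]
        rfl
    have hsubdet : ((gramChi n β).submatrix f f).det ≠ 0 := by
      apply det_ne_zero_of_antitriangular
      · intro i j hij
        have hfi := hfval i
        have hfj := hfval j
        have hi : (i : ℕ) < n + 1 := i.is_lt
        have hj : (j : ℕ) < n + 1 := j.is_lt
        simp only [Matrix.submatrix_apply, gramChi, Matrix.of_apply]
        rw [if_neg]
        rw [hfi, hfj]
        split <;> split <;> omega
      · intro i
        have hfi := hfval i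
        have hfr := hfval i.rev
        have hi : (i : ℕ) < n + 1 := i.is_lt
        have hrev : ((Fin.rev i : Fin (n + 1)) : ℕ) = n - (i : ℕ) := by
          rw [Fin.val_rev]; omega
        rw [hrev] at hfr
        simp only [Matrix.submatrix_apply, gramChi, Matrix.of_apply]
        have hsum : ((f i : Fin (n+2)) : ℕ) + ((f i.rev : Fin (n+2)) : ℕ) = n + 1 := by
          rw [hfi, hfr]
          split <;> split <;> omega
        have hne : ((f i : Fin (n+2)) : ℕ) ≠ ((f i.rev : Fin (n+2)) : ℕ) := by
          rw [hfi, hfr]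
          split <;> split <;> omega
        rw [if_pos (by omega)]
        have hsum' : ((f i : Fin (n+2)) : ℕ) + ((f i.rev : Fin (n+2)) : ℕ) - 1 = n := by
          omega
        rw [hsum']
        apply mul_ne_zero (mul_ne_zero ?_ ?_) hβ
        · intro h
          exact hne (Nat.cast_injective (sub_eq_zero.mp h)).symm
        · exact_mod_cast Nat.cast_ne_zero.mpr (Nat.factorial_ne_zero _)
    have hsubunit : IsUnit ((gramChi n β).submatrix f f) :=
      (Matrix.isUnit_iff_isUnit_det _).mpr (isUnit_iff_ne_zero.mpr hsubdet)
    have hsubrank : ((gramChi n β).submatrix f f).rank = n + 1 := by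
      have := Matrix.rank_of_isUnit _ hsubunit
      simpa using this
    have hlb : n + 1 ≤ (gramChi n β).rank := by
      rw [← hsubrank]
      exact rank_submatrix_self_le _ f
    omega
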